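/- Let u = (e_r + ⋯ + e_{r+m})/(m+1), v = (e_s + ⋯ + e_{s+p})/(p+1), w = (e_t + ⋯ + e_{t+q})/(q+1) be averages over three pairwise disjoint blocks of consecutive standard basis vectors of ℝ^N, and set ᾱ = u − v and β̄ = v − w. If ᾱ and β̄ together with their negatives and ±(u − w) satisfy the crystallographic condition (i.e. 2⟨ᾱ,β̄⟩/⟨β̄,β̄⟩ and 2⟨ᾱ,β̄⟩/⟨ᾱ,ᾱ⟩ are integers with product in {1,2,3}), then m = p = q. -/

import Mathlib

open scoped RealInnerProductSpace

lemma inner_sum_blocks {V : Type*} [NormedAddCommGroup V] [InnerProductSpace ℝ V]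
    (e : ℕ → V) (A B : Finset ℕ)
    (h : ∀ i ∈ A, ∀ j ∈ B, ⟪e i, e j⟫ = if i = j then 1 else 0) :
    ⟪∑ i ∈ A, e i, ∑ j ∈ B, e j⟫ = ((A ∩ B).card : ℝ) := by
  rw [sum_inner]
  have : ∀ i ∈ A, ⟪e i, ∑ j ∈ B, e j⟫ = if i ∈ B then (1:ℝ) else 0 := by
    intro i hi
    rw [inner_sum]
    rw [Finset.sum_congr rfl (fun j hj => h i hi j hj)]
    simp [Finset.sum_ite_eq' B i (fun _ => (1:ℝ))]
  rw [Finset.sum_congr rfl this, Finset.sum_ite_mem, Finset.sum_const]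
  simp

/-- If ᾱ = u − v and β̄ = v − w (u, v, w averages over three pairwise disjoint blocks of
orthonormal vectors of sizes m+1, p+1, q+1) satisfy the crystallographic condition, then
m = p = q. -/
theorem stmt5 {V : Type*} [NormedAddCommGroup V] [InnerProductSpace ℝ V]
    (r m s p t q : ℕ) (e : ℕ → V)
    (hd1 : Disjoint (Finset.Icc r (r + m)) (Finset.Icc s (s + p)))
    (hd2 : Disjoint (Finset.Icc s (s + p)) (Finset.Icc t (t + q)))
    (hd3 : Disjoint (Finset.Icc r (r + m)) (Finset.Icc t (t + q)))
    (horth : ∀ i ∈ Finset.Icc r (r + m) ∪ Finset.Icc s (s + p) ∪ Finset.Icc t (t + q),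
      ∀ j ∈ Finset.Icc r (r + m) ∪ Finset.Icc s (s + p) ∪ Finset.Icc t (t + q),
      ⟪e i, e j⟫ = if i = j then 1 else 0)
    (u v w : V)
    (hu : u = ((m : ℝ) + 1)⁻¹ • ∑ i ∈ Finset.Icc r (r + m), e i)
    (hv : v = ((p : ℝ) + 1)⁻¹ • ∑ i ∈ Finset.Icc s (s + p), e i)
    (hw : w = ((q : ℝ) + 1)⁻¹ • ∑ i ∈ Finset.Icc t (t + q), e i)
    (hcart : ∃ a b : ℤ, 2 * ⟪u - v, v - w⟫ / ⟪v - w, v - w⟫ = (a : ℝ) ∧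
      2 * ⟪u - v, v - w⟫ / ⟪u - v, u - v⟫ = (b : ℝ) ∧
      (a * b = 1 ∨ a * b = 2 ∨ a * b = 3)) :
    m = p ∧ p = q := by
  set A := Finset.Icc r (r + m) with hA
  set B := Finset.Icc s (s + p) with hB
  set C := Finset.Icc t (t + q) with hC
  set M : ℝ := ((m : ℝ) + 1)⁻¹ with hM
  set P : ℝ := ((p : ℝ) + 1)⁻¹ with hP
  set Q : ℝ := ((q : ℝ) + 1)⁻¹ with hQ
  have hm0 : (0:ℝ) < (m:ℝ) + 1 := by positivity
  have hp0 : (0:ℝ) < (p:ℝ) + 1 := by positivity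
  have hq0 : (0:ℝ) < (q:ℝ) + 1 := by positivity
  have hMpos : 0 < M := by positivity
  have hPpos : 0 < P := by positivity
  have hQpos : 0 < Q := by positivity
  -- inner products
  have key : ∀ X Y : Finset ℕ, X ⊆ A ∪ B ∪ C → Y ⊆ A ∪ B ∪ C →
      ⟪∑ i ∈ X, e i, ∑ j ∈ Y, e j⟫ = ((X ∩ Y).card : ℝ) := by
    intro X Y hX hY
    exact inner_sum_blocks e X Y (fun i hi j hj => horth i (hX hi) j (hY hj))
  have hsubA : A ⊆ A ∪ B ∪ C := by intro x hx; simp [hx]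
  have hsubB : B ⊆ A ∪ B ∪ C := by intro x hx; simp [hx]
  have hsubC : C ⊆ A ∪ B ∪ C := by intro x hx; simp [hx]
  have cardA : ((A ∩ A).card : ℝ) = (m:ℝ) + 1 := by
    rw [Finset.inter_self, hA, Nat.card_Icc, show r + m + 1 - r = m + 1 from by omega]
    push_cast
    ring
  have cardB : ((B ∩ B).card : ℝ) = (p:ℝ) + 1 := by
    rw [Finset.inter_self, hB, Nat.card_Icc, show s + p + 1 - s = p + 1 from by omega]
    push_cast
    ring
  have cardC : ((C ∩ C).card : ℝ) = (q:ℝ) + 1 := by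
    rw [Finset.inter_self, hC, Nat.card_Icc, show t + q + 1 - t = q + 1 from by omega]
    push_cast
    ring
  have hAB : ((A ∩ B).card : ℝ) = 0 := by
    rw [Finset.disjoint_iff_inter_eq_empty.mp hd1]; simp
  have hBC : ((B ∩ C).card : ℝ) = 0 := by
    rw [Finset.disjoint_iff_inter_eq_empty.mp hd2]; simp
  have hAC : ((A ∩ C).card : ℝ) = 0 := by
    rw [Finset.disjoint_iff_inter_eq_empty.mp hd3]; simp
  have hBA : ((B ∩ A).card : ℝ) = 0 := by rw [Finset.inter_comm]; exact hAB
  have hCB : ((C ∩ B).card : ℝ) = 0 := by rw [Finset.inter_comm]; exact hBC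
  have hCA : ((C ∩ A).card : ℝ) = 0 := by rw [Finset.inter_comm]; exact hAC
  have huv : ⟪u, v⟫ = 0 := by
    rw [hu, hv, real_inner_smul_left, real_inner_smul_right,
      key A B hsubA hsubB, hAB]; ring
  have huw : ⟪u, w⟫ = 0 := by
    rw [hu, hw, real_inner_smul_left, real_inner_smul_right,
      key A C hsubA hsubC, hAC]; ring
  have hvw : ⟪v, w⟫ = 0 := by
    rw [hv, hw, real_inner_smul_left, real_inner_smul_right,
      key B C hsubB hsubC, hBC]; ring
  have hvu : ⟪v, u⟫ = 0 := by rw [real_inner_comm]; exact huv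
  have hwv : ⟪w, v⟫ = 0 := by rw [real_inner_comm]; exact hvw
  have huu : ⟪u, u⟫ = M := by
    rw [hu, real_inner_smul_left, real_inner_smul_right,
      key A A hsubA hsubA, cardA, hM]
    field_simp
  have hvv : ⟪v, v⟫ = P := by
    rw [hv, real_inner_smul_left, real_inner_smul_right,
      key B B hsubB hsubB, cardB, hP]
    field_simp
  have hww : ⟪w, w⟫ = Q := by
    rw [hw, real_inner_smul_left, real_inner_smul_right,
      key C C hsubC hsubC, cardC, hQ]
    field_simp
  simp only [inner_sub_left, inner_sub_right] at hcart
  rw [huv, huw, hvv, hvw, hvu, hwv, hww, huu] at hcart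
  obtain ⟨a, b, ha, hb, hab⟩ := hcart
  have hPQ : 0 < P + Q := by linarith
  have hMP : 0 < M + P := by linarith
  have ha' : (a : ℝ) = -2 * P / (P + Q) := by rw [← ha]; ring_nf
  have hb' : (b : ℝ) = -2 * P / (M + P) := by rw [← hb]; ring_nf
  have haneg : (a : ℝ) < 0 := by
    rw [ha']
    apply div_neg_of_neg_of_pos _ hPQ
    linarith
  have hagt : (-2 : ℝ) < (a : ℝ) := by
    rw [ha', lt_div_iff₀ hPQ]
    linarith
  have hbneg : (b : ℝ) < 0 := by
    rw [hb']
    apply div_neg_of_neg_of_pos _ hMP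
    linarith
  have hbgt : (-2 : ℝ) < (b : ℝ) := by
    rw [hb', lt_div_iff₀ hMP]
    linarith
  have haeq : a = -1 := by
    have h1 : a < 0 := by exact_mod_cast haneg
    have h2 : -2 < a := by exact_mod_cast hagt
    omega
  have hbeq : b = -1 := by
    have h1 : b < 0 := by exact_mod_cast hbneg
    have h2 : -2 < b := by exact_mod_cast hbgt
    omega
  rw [haeq] at ha'
  rw [hbeq] at hb'
  have hPQeq : P = Q := by
    field_simp at ha'
    push_cast at ha'
    linarith
  have hMPeq : M = P := by
    field_simp at hb'
    push_cast at hb'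
    linarith
  constructor
  · have : ((m:ℝ) + 1)⁻¹ = ((p:ℝ) + 1)⁻¹ := hMPeq
    have := inv_injective this
    have : (m:ℝ) = (p:ℝ) := by linarith
    exact_mod_cast this
  · have : ((p:ℝ) + 1)⁻¹ = ((q:ℝ) + 1)⁻¹ := hPQeq
    have := inv_injective this
    have : (p:ℝ) = (q:ℝ) := by linarith
    exact_mod_cast this
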